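/- Let L : ℝ⁴ × ℝ⁴ → ℝ be a Lagrangian of class C² that is positively 1-homogeneous in its second argument, and let x : [a,b] → ℝ⁴ be a C² path with x'(t) ≠ 0. Then for all t, the Euler–Lagrange expression is orthogonal to the velocity: ⟨∂₁L(x(t), x'(t)) − d/dt [∂₂L(x(t), x'(t))], x'(t)⟩ = 0. -/

import Mathlib

open ContinuousLinearMap

/-- Euler's identity for positively 1-homogeneous functions. -/
lemma euler_identity_aux
    (L : (Fin 4 → ℝ) → (Fin 4 → ℝ) → ℝ)
    (hL : ContDiff ℝ 2 (fun p : (Fin 4 → ℝ) × (Fin 4 → ℝ) => L p.1 p.2))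
    (hhom : ∀ (x v : Fin 4 → ℝ) (l : ℝ), 0 < l → L x (l • v) = l * L x v)
    (y v : Fin 4 → ℝ) :
    (fderiv ℝ (L y) v) v = L y v := by
  have hdiff : DifferentiableAt ℝ (fun p : (Fin 4 → ℝ) × (Fin 4 → ℝ) => L p.1 p.2) (y, v) :=
    (hL.differentiable two_ne_zero).differentiableAt
  have hmk : HasFDerivAt (fun w : Fin 4 → ℝ => (y, w))
      (ContinuousLinearMap.inr ℝ (Fin 4 → ℝ) (Fin 4 → ℝ)) v :=
    hasFDerivAt_prodMk_right y v
  have hLy : HasFDerivAt (L y)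
      ((fderiv ℝ (fun p : (Fin 4 → ℝ) × (Fin 4 → ℝ) => L p.1 p.2) (y, v)).comp
        (ContinuousLinearMap.inr ℝ (Fin 4 → ℝ) (Fin 4 → ℝ))) v :=
    (hdiff.hasFDerivAt).comp v hmk
  have hsm : HasDerivAt (fun l : ℝ => l • v) v 1 := by
    simpa using (hasDerivAt_id (1 : ℝ)).smul_const v
  have hg1 : HasDerivAt (fun l : ℝ => L y (l • v)) ((fderiv ℝ (L y) v) v) 1 := by
    have h := hLy.differentiableAt.hasFDerivAt
    have h2 : HasFDerivAt (L y) (fderiv ℝ (L y) v) ((1 : ℝ) • v) := by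
      rwa [one_smul]
    exact h2.comp_hasDerivAt 1 hsm
  have hev : (fun l : ℝ => l * L y v) =ᶠ[nhds (1 : ℝ)] fun l : ℝ => L y (l • v) := by
    filter_upwards [Ioi_mem_nhds (show (0 : ℝ) < 1 by norm_num)] with l hl
    exact (hhom y v l hl).symm
  have hg2 : HasDerivAt (fun l : ℝ => L y (l • v)) (L y v) 1 := by
    have h := (hasDerivAt_id (1 : ℝ)).mul_const (L y v)
    simpa using h.congr_of_eventuallyEq hev.symm
  exact hg1.unique hg2

theorem euler_lagrange_orthogonal_velocity
    (L : (Fin 4 → ℝ) → (Fin 4 → ℝ) → ℝ)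
    (hL : ContDiff ℝ 2 (fun p : (Fin 4 → ℝ) × (Fin 4 → ℝ) => L p.1 p.2))
    (hhom : ∀ (x v : Fin 4 → ℝ) (l : ℝ), 0 < l → L x (l • v) = l * L x v)
    (x : ℝ → Fin 4 → ℝ) (hx : ContDiff ℝ 2 x)
    (hx' : ∀ t, deriv x t ≠ 0) :
    ∀ t : ℝ,
      (fderiv ℝ (fun y => L y (deriv x t)) (x t)) (deriv x t)
        - (deriv (fun s => fderiv ℝ (L (x s)) (deriv x s)) t) (deriv x t) = 0 := by
  intro t
  set L' : (Fin 4 → ℝ) × (Fin 4 → ℝ) → ℝ := fun p => L p.1 p.2 with hL'def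
  set DL : (Fin 4 → ℝ) × (Fin 4 → ℝ) → ((Fin 4 → ℝ) × (Fin 4 → ℝ) →L[ℝ] ℝ) := fun p => fderiv ℝ L' p with hDLdef
  -- regularity facts
  have hxd : Differentiable ℝ x := hx.differentiable two_ne_zero
  have hx1 : ContDiff ℝ 1 (deriv x) := by
    have := (contDiff_succ_iff_deriv (n := 1)).mp (by exact_mod_cast hx)
    exact this.2.2
  have hxdd : Differentiable ℝ (deriv x) := hx1.differentiable one_ne_zero
  have hφ : ContDiff ℝ 1 (fun s : ℝ => (x s, deriv x s)) :=
    (hx.of_le one_le_two).prodMk hx1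
  have hDL1 : ContDiff ℝ 1 DL := hL.fderiv_right (by norm_num)
  set v : (Fin 4 → ℝ) := deriv x t with hv
  set v' : (Fin 4 → ℝ) := deriv (deriv x) t with hv'
  set p : (Fin 4 → ℝ) × (Fin 4 → ℝ) := (x t, v) with hp
  -- derivative of φ
  have hφ' : HasDerivAt (fun s : ℝ => (x s, deriv x s)) (v, v') t :=
    (hxd t).hasDerivAt.prodMk (hxdd t).hasDerivAt
  -- derivative of DL ∘ φ
  have hDLφ : HasDerivAt (fun s : ℝ => DL (x s, deriv x s)) ((fderiv ℝ DL p) (v, v')) t :=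
    ((hDL1.differentiable one_ne_zero p).hasFDerivAt).comp_hasDerivAt t hφ'
  -- partial derivative in second slot
  have hpartial2 : ∀ s : ℝ, fderiv ℝ (L (x s)) (deriv x s)
      = (DL (x s, deriv x s)).comp (ContinuousLinearMap.inr ℝ (Fin 4 → ℝ) (Fin 4 → ℝ)) := by
    intro s
    have hdiff : DifferentiableAt ℝ L' (x s, deriv x s) :=
      (hL.differentiable two_ne_zero).differentiableAt
    have hmk : HasFDerivAt (fun w : (Fin 4 → ℝ) => (x s, w)) (ContinuousLinearMap.inr ℝ (Fin 4 → ℝ) (Fin 4 → ℝ))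
        (deriv x s) := hasFDerivAt_prodMk_right (x s) (deriv x s)
    exact ((hdiff.hasFDerivAt).comp (deriv x s) hmk).fderiv
  -- the family A s = ∂₂L(x s, x' s) and its derivative
  have hA : HasDerivAt (fun s : ℝ => (DL (x s, deriv x s)).comp (ContinuousLinearMap.inr ℝ (Fin 4 → ℝ) (Fin 4 → ℝ)))
      (((fderiv ℝ DL p) (v, v')).comp (ContinuousLinearMap.inr ℝ (Fin 4 → ℝ) (Fin 4 → ℝ))) t := by
    have := hDLφ.clm_comp (hasDerivAt_const t (ContinuousLinearMap.inr ℝ (Fin 4 → ℝ) (Fin 4 → ℝ)))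
    simpa using this
  -- rewrite the function in the goal
  have hfun : (fun s : ℝ => fderiv ℝ (L (x s)) (deriv x s))
      = fun s : ℝ => (DL (x s, deriv x s)).comp (ContinuousLinearMap.inr ℝ (Fin 4 → ℝ) (Fin 4 → ℝ)) := by
    funext s; exact hpartial2 s
  -- G(s) = A s (x' s)
  have hG : HasDerivAt
      (fun s : ℝ => ((DL (x s, deriv x s)).comp (ContinuousLinearMap.inr ℝ (Fin 4 → ℝ) (Fin 4 → ℝ))) (deriv x s))
      ((((fderiv ℝ DL p) (v, v')).comp (ContinuousLinearMap.inr ℝ (Fin 4 → ℝ) (Fin 4 → ℝ))) v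
        + ((DL p).comp (ContinuousLinearMap.inr ℝ (Fin 4 → ℝ) (Fin 4 → ℝ))) v') t :=
    hA.clm_apply (hxdd t).hasDerivAt
  -- F(s) = L(x s, x' s)
  have hF : HasDerivAt (fun s : ℝ => L' (x s, deriv x s)) ((DL p) (v, v')) t :=
    (((hL.differentiable two_ne_zero).differentiableAt).hasFDerivAt).comp_hasDerivAt t hφ'
  -- F = G by Euler's identity
  have hFG : (fun s : ℝ => L' (x s, deriv x s))
      = fun s : ℝ => ((DL (x s, deriv x s)).comp (ContinuousLinearMap.inr ℝ (Fin 4 → ℝ) (Fin 4 → ℝ))) (deriv x s) := by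
    funext s
    have := euler_identity_aux L hL hhom (x s) (deriv x s)
    rw [hpartial2 s] at this
    exact this.symm
  have hkey : (DL p) (v, v')
      = (((fderiv ℝ DL p) (v, v')).comp (ContinuousLinearMap.inr ℝ (Fin 4 → ℝ) (Fin 4 → ℝ))) v
        + ((DL p).comp (ContinuousLinearMap.inr ℝ (Fin 4 → ℝ) (Fin 4 → ℝ))) v' := by
    have hF' : HasDerivAt
        (fun s : ℝ => ((DL (x s, deriv x s)).comp (ContinuousLinearMap.inr ℝ (Fin 4 → ℝ) (Fin 4 → ℝ))) (deriv x s))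
        ((DL p) (v, v')) t := hFG ▸ hF
    exact hF'.unique hG
  -- partial derivative in first slot
  have hpartial1 : fderiv ℝ (fun y => L y v) (x t)
      = (DL p).comp (ContinuousLinearMap.inl ℝ (Fin 4 → ℝ) (Fin 4 → ℝ)) := by
    have hdiff : DifferentiableAt ℝ L' p := (hL.differentiable two_ne_zero).differentiableAt
    have hmk : HasFDerivAt (fun w : (Fin 4 → ℝ) => (w, v)) (ContinuousLinearMap.inl ℝ (Fin 4 → ℝ) (Fin 4 → ℝ)) (x t) :=
      hasFDerivAt_prodMk_left (x t) v
    exact ((hdiff.hasFDerivAt).comp (x t) hmk).fderiv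
  -- compute deriv of the fderiv family
  have hderivA : deriv (fun s => fderiv ℝ (L (x s)) (deriv x s)) t
      = ((fderiv ℝ DL p) (v, v')).comp (ContinuousLinearMap.inr ℝ (Fin 4 → ℝ) (Fin 4 → ℝ)) := by
    rw [hfun]; exact hA.deriv
  rw [hderivA, hpartial1]
  have hsplit : (DL p) (v, v') = (DL p) (v, 0) + (DL p) (0, v') := by
    rw [← map_add]
    norm_num
  simp only [ContinuousLinearMap.comp_apply, ContinuousLinearMap.inl_apply,
    ContinuousLinearMap.inr_apply] at hkey ⊢
  have := hkey
  rw [hsplit] at this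
  linarith
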